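/- For n = 2k ≥ 2, the group G_n admits a free product decomposition G_n = S * ⟨t_0⟩ * ... * ⟨t_{n-1}⟩ where S is isomorphic to the fundamental group of an orientable surface of genus n+1 with two boundary components; explicitly S = ⟨c_0, d'_n, a_0, b_0, a'_1, b'_1, ..., a'_n, b'_n | c_0 d'_n [a'_n, b'_n]...[a'_1, b'_1][a_0, b_0] = 1⟩ with d'_n conjugate to d_n in G_n. -/

import Mathlib

open scoped commutatorElement

/-- Generators of `Gₙ`: quadruples `aᵢ, bᵢ, cᵢ, dᵢ` for `0 ≤ i ≤ n`
(encoded as `Fin (n+1) × Fin 4`) together with stable letters `tⱼ` for `0 ≤ j ≤ n-1`. -/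
def GGen (n : ℕ) : Type := (Fin (n + 1) × Fin 4) ⊕ Fin n

/-- The relations of `Gₙ`: `cᵢ dᵢ [aᵢ, bᵢ] = 1` for `0 ≤ i ≤ n` and
`tⱼ⁻¹ dⱼ tⱼ = c_{j+1}` for `0 ≤ j ≤ n - 1`. -/
def GRels (n : ℕ) : Set (FreeGroup (GGen n)) :=
  {r | (∃ i : Fin (n + 1),
          r = FreeGroup.of ((Sum.inl (i, 2)) : GGen n) * FreeGroup.of ((Sum.inl (i, 3)) : GGen n) *
              ⁅FreeGroup.of ((Sum.inl (i, 0)) : GGen n), FreeGroup.of ((Sum.inl (i, 1)) : GGen n)⁆) ∨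
       (∃ j : Fin n,
          r = (FreeGroup.of ((Sum.inr j) : GGen n))⁻¹ * FreeGroup.of ((Sum.inl (j.castSucc, 3)) : GGen n) *
              FreeGroup.of ((Sum.inr j) : GGen n) * (FreeGroup.of ((Sum.inl (j.succ, 2)) : GGen n))⁻¹)}

/-- The group `Gₙ`, obtained by gluing the surface groups
`Hᵢ = ⟨cᵢ, dᵢ, aᵢ, bᵢ ∣ cᵢ dᵢ [aᵢ, bᵢ] = 1⟩`, `0 ≤ i ≤ n`,
along boundary curves via `dⱼ^{tⱼ} = c_{j+1}`, `0 ≤ j ≤ n-1`. -/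
abbrev GGrp (n : ℕ) : Type := PresentedGroup (GRels n)

/-- The generator `aᵢ` of `Gₙ`. -/
def Ga (n : ℕ) (i : Fin (n + 1)) : GGrp n := PresentedGroup.of ((Sum.inl (i, 0)) : GGen n)

/-- The generator `bᵢ` of `Gₙ`. -/
def Gb (n : ℕ) (i : Fin (n + 1)) : GGrp n := PresentedGroup.of ((Sum.inl (i, 1)) : GGen n)

/-- The generator `cᵢ` of `Gₙ`. -/
def Gc (n : ℕ) (i : Fin (n + 1)) : GGrp n := PresentedGroup.of ((Sum.inl (i, 2)) : GGen n)

/-- The generator `dᵢ` of `Gₙ`. -/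
def Gd (n : ℕ) (i : Fin (n + 1)) : GGrp n := PresentedGroup.of ((Sum.inl (i, 3)) : GGen n)

/-- The stable letter `tⱼ` of `Gₙ`. -/
def Gt (n : ℕ) (j : Fin n) : GGrp n := PresentedGroup.of ((Sum.inr j) : GGen n)

/-- The canonical copy of the surface group `Hᵢ` inside `Gₙ`,
generated by `aᵢ, bᵢ, cᵢ, dᵢ`. -/
def Hsub (n : ℕ) (i : Fin (n + 1)) : Subgroup (GGrp n) :=
  Subgroup.closure {Ga n i, Gb n i, Gc n i, Gd n i}
/-- Generators for the surface group `S`: `c₀`, `d'ₙ`, and pairs `a'ᵢ, b'ᵢ` for `0 ≤ i ≤ n`. -/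
def SGen (n : ℕ) : Type := Fin 2 ⊕ (Fin (n + 1) × Bool)

/-- The relation `c₀ d'ₙ [a'ₙ, b'ₙ] ⋯ [a'₁, b'₁] [a₀, b₀] = 1`. -/
def sRel (n : ℕ) : FreeGroup (SGen n) :=
  FreeGroup.of ((Sum.inl 0) : SGen n) * FreeGroup.of ((Sum.inl 1) : SGen n) *
    (((List.finRange (n + 1)).reverse.map fun i =>
      ⁅FreeGroup.of ((Sum.inr (i, true)) : SGen n),
        FreeGroup.of ((Sum.inr (i, false)) : SGen n)⁆).prod)

/-- The fundamental group of an orientable surface of genus `n + 1` with two boundary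
components, with boundary generators `c₀` and `d'ₙ`. -/
abbrev SGrp (n : ℕ) : Type := PresentedGroup ({sRel n} : Set _)

/-- The boundary generator `c₀` of `S`. -/
def Sc (n : ℕ) : SGrp n := PresentedGroup.of ((Sum.inl 0) : SGen n)

/-- The boundary generator `d'ₙ` of `S`. -/
def Sd (n : ℕ) : SGrp n := PresentedGroup.of ((Sum.inl 1) : SGen n)

namespace SurfaceDecomp

open Monoid

/-! ### Generic telescoping lemmas -/

/-- `wP l m = l (m-1) * ⋯ * l 0`. -/
def wP {H : Type*} [Monoid H] (l : ℕ → H) : ℕ → H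
  | 0 => 1
  | m + 1 => l m * wP l m

theorem wP_eq_prod {H : Type*} [Monoid H] (l : ℕ → H) :
    ∀ m, ((List.range m).reverse.map l).prod = wP l m := by
  intro m
  induction m with
  | zero => simp [wP]
  | succ m ih =>
      rw [List.range_succ, List.reverse_append, List.reverse_singleton, List.singleton_append,
        List.map_cons, List.prod_cons, ih, wP]

theorem finRange_reverse_map_prod {H : Type*} [Monoid H] {N : ℕ} (f : Fin N → H) :
    ((List.finRange N).reverse.map f).prod
      = wP (fun i => if h : i < N then f ⟨i, h⟩ else 1) N := by
  rw [← wP_eq_prod]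
  congr 1
  rw [List.map_reverse, List.map_reverse]
  congr 1
  conv_rhs => rw [← (show (List.finRange N).map Fin.val = List.range N from
    List.ext_getElem (by simp) (by simp)), List.map_map]
  apply List.map_congr_left
  intro i _
  simp [Fin.is_lt]

theorem tele {H : Type*} [Group H] (l : ℕ → H) (c : H) (q : ℕ → H)
    (h0 : q 0 = c * (l 0)⁻¹) (hs : ∀ m, q (m + 1) = q m * (l (m + 1))⁻¹) :
    ∀ m, q m * wP l (m + 1) = c := by
  intro m
  induction m with
  | zero => rw [h0, wP, wP]; group
  | succ m ih => rw [hs, wP, ← mul_assoc, mul_assoc _ _ (l (m+1)), inv_mul_cancel, mul_one, ih]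

theorem comm_conj {H : Type*} [Group H] (g x y : H) :
    ⁅g⁻¹ * x * g, g⁻¹ * y * g⁆ = g⁻¹ * ⁅x, y⁆ * g := by
  simp only [commutatorElement_def]
  group

/-! ### Relations in `GGrp n` -/

variable (n : ℕ)

theorem grel_surface (i : Fin (n + 1)) :
    Gc n i * Gd n i * ⁅Ga n i, Gb n i⁆ = 1 := by
  have h : (FreeGroup.of ((Sum.inl (i, 2)) : GGen n) * FreeGroup.of ((Sum.inl (i, 3)) : GGen n) *
      ⁅FreeGroup.of ((Sum.inl (i, 0)) : GGen n), FreeGroup.of ((Sum.inl (i, 1)) : GGen n)⁆)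
      ∈ GRels n := Or.inl ⟨i, rfl⟩
  have h1 : PresentedGroup.mk (GRels n) (FreeGroup.of ((Sum.inl (i, 2)) : GGen n) *
      FreeGroup.of ((Sum.inl (i, 3)) : GGen n) *
      ⁅FreeGroup.of ((Sum.inl (i, 0)) : GGen n), FreeGroup.of ((Sum.inl (i, 1)) : GGen n)⁆) = 1 :=
    (QuotientGroup.eq_one_iff _).mpr (Subgroup.subset_normalClosure h)
  erw [map_mul, map_mul, map_commutatorElement] at h1
  exact h1

theorem grel_conj (j : Fin n) :
    (Gt n j)⁻¹ * Gd n j.castSucc * Gt n j = Gc n j.succ := by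
  have h : ((FreeGroup.of ((Sum.inr j) : GGen n))⁻¹ *
      FreeGroup.of ((Sum.inl (j.castSucc, 3)) : GGen n) *
      FreeGroup.of ((Sum.inr j) : GGen n) *
      (FreeGroup.of ((Sum.inl (j.succ, 2)) : GGen n))⁻¹) ∈ GRels n := Or.inr ⟨j, rfl⟩
  have h1 : PresentedGroup.mk (GRels n) ((FreeGroup.of ((Sum.inr j) : GGen n))⁻¹ *
      FreeGroup.of ((Sum.inl (j.castSucc, 3)) : GGen n) *
      FreeGroup.of ((Sum.inr j) : GGen n) *
      (FreeGroup.of ((Sum.inl (j.succ, 2)) : GGen n))⁻¹) = 1 :=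
    (QuotientGroup.eq_one_iff _).mpr (Subgroup.subset_normalClosure h)
  erw [map_mul, map_mul, map_mul, map_inv, map_inv] at h1
  have := mul_eq_one_iff_eq_inv.mp h1
  rw [inv_inv] at this
  exact this

/-! ### Elements of `GGrp n` -/

/-- `tⱼ` as a function of a natural number. -/
def Tg (j : ℕ) : GGrp n := if h : j < n then Gt n ⟨j, h⟩ else 1

/-- `Pg i = t₀ t₁ ⋯ t_{i-1}`. -/
def Pg : ℕ → GGrp n
  | 0 => 1
  | i + 1 => Pg i * Tg n i

/-- The element `a'ᵢ`. -/
def al (i : Fin (n + 1)) : GGrp n :=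
  if Even (i : ℕ) then Pg n i * Ga n i * (Pg n i)⁻¹
  else Pg n i * (Gd n i * Gb n i * (Gd n i)⁻¹) * (Pg n i)⁻¹

/-- The element `b'ᵢ`. -/
def be (i : Fin (n + 1)) : GGrp n :=
  if Even (i : ℕ) then Pg n i * Gb n i * (Pg n i)⁻¹
  else Pg n i * (Gd n i * Ga n i * (Gd n i)⁻¹) * (Pg n i)⁻¹

/-- The commutator `⁅a'ᵢ, b'ᵢ⁆`. -/
def Kg (i : ℕ) : GGrp n := if h : i < n + 1 then ⁅al n ⟨i, h⟩, be n ⟨i, h⟩⁆ else 1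

/-- `Qg i = d₀ ⁅a'₁,b'₁⁆⁻¹ ⋯ ⁅a'ᵢ,b'ᵢ⁆⁻¹`. -/
def Qg : ℕ → GGrp n
  | 0 => Gd n 0
  | i + 1 => Qg i * (Kg n (i + 1))⁻¹

theorem Qg_eq : ∀ i, (h : i < n + 1) → Qg n i =
    Pg n i * (if Even i then Gd n ⟨i, h⟩ else (Gd n ⟨i, h⟩)⁻¹) * (Pg n i)⁻¹ := by
  intro i
  induction i with
  | zero =>
      intro h
      simp [Qg, Pg, Fin.mk_zero]
  | succ i ih =>
      intro h
      have hi : i < n := by omega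
      have hi1 : i < n + 1 := by omega
      set j : Fin n := ⟨i, hi⟩ with hj
      have hcs : (j.castSucc : Fin (n + 1)) = ⟨i, hi1⟩ := rfl
      have hsc : (j.succ : Fin (n + 1)) = ⟨i + 1, h⟩ := rfl
      -- d_i = t_i * c_{i+1} * t_i⁻¹  and  c_{i+1} = ⁅a,b⁆⁻¹ * d_{i+1}⁻¹
      have hd : Gd n ⟨i, hi1⟩ =
          Gt n j * (⁅Ga n ⟨i+1, h⟩, Gb n ⟨i+1, h⟩⁆⁻¹ * (Gd n ⟨i+1, h⟩)⁻¹) * (Gt n j)⁻¹ := by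
        have h1 := grel_conj n j
        rw [hcs, hsc] at h1
        have h2 := grel_surface n ⟨i + 1, h⟩
        have hc : Gc n ⟨i+1, h⟩ = ⁅Ga n ⟨i+1, h⟩, Gb n ⟨i+1, h⟩⁆⁻¹ * (Gd n ⟨i+1, h⟩)⁻¹ := by
          rw [mul_assoc, mul_eq_one_iff_eq_inv] at h2
          rw [h2, mul_inv_rev]
        rw [← hc, ← h1]; group
      have hKg : Kg n (i + 1) = ⁅al n ⟨i+1, h⟩, be n ⟨i+1, h⟩⁆ := dif_pos h
      have hTg : Tg n i = Gt n j := dif_pos hi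
      have hPg : Pg n (i + 1) = Pg n i * Gt n j := by rw [Pg, hTg]
      have hQ : Qg n (i + 1) = Qg n i * (Kg n (i+1))⁻¹ := rfl
      rcases Nat.even_or_odd i with hpar | hpar
      · -- i even, i+1 odd
        have hodd : ¬ Even (i + 1) := by simp [Nat.even_add_one, hpar]
        have h1 := ih hi1
        rw [if_pos hpar] at h1
        rw [if_neg hodd]
        have hal : al n ⟨i+1, h⟩ =
            Pg n (i+1) * (Gd n ⟨i+1,h⟩ * Gb n ⟨i+1,h⟩ * (Gd n ⟨i+1,h⟩)⁻¹) * (Pg n (i+1))⁻¹ := by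
          rw [al, if_neg]; exact hodd
        have hbe : be n ⟨i+1, h⟩ =
            Pg n (i+1) * (Gd n ⟨i+1,h⟩ * Ga n ⟨i+1,h⟩ * (Gd n ⟨i+1,h⟩)⁻¹) * (Pg n (i+1))⁻¹ := by
          rw [be, if_neg]; exact hodd
        rw [hQ, h1, hd, hKg, hal, hbe, hPg]
        simp only [commutatorElement_def]
        group
      · -- i odd, i+1 even
        have heven : Even (i + 1) := Odd.add_one hpar
        have hodd : ¬ Even i := Nat.not_even_iff_odd.mpr hpar
        have h1 := ih hi1
        rw [if_neg hodd] at h1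
        rw [if_pos heven]
        have hal : al n ⟨i+1, h⟩ = Pg n (i+1) * Ga n ⟨i+1,h⟩ * (Pg n (i+1))⁻¹ := by
          rw [al, if_pos]; exact heven
        have hbe : be n ⟨i+1, h⟩ = Pg n (i+1) * Gb n ⟨i+1,h⟩ * (Pg n (i+1))⁻¹ := by
          rw [be, if_pos]; exact heven
        rw [hQ, h1, hd, hKg, hal, hbe, hPg]
        simp only [commutatorElement_def]
        group

/-! ### The map `φ : S ∗ F → Gₙ` -/

/-- Images of the generators of `S` in `Gₙ`. -/
def fS : SGen n → GGrp n
  | Sum.inl j => if j = 0 then Gc n 0 else Qg n n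
  | Sum.inr p => if p.2 then al n p.1 else be n p.1

theorem Kg_zero : Kg n 0 = ⁅Ga n 0, Gb n 0⁆ := by
  have h : (0:ℕ) < n + 1 := Nat.succ_pos n
  have h0 : (⟨0, h⟩ : Fin (n+1)) = 0 := rfl
  have hv : ((0 : Fin (n+1)) : ℕ) = 0 := rfl
  rw [Kg, dif_pos h, h0, al, be, hv, if_pos Even.zero, if_pos Even.zero]
  simp [Pg]

theorem Qg_prod : Qg n n * wP (Kg n) (n + 1) = Gd n 0 * Kg n 0 := by
  refine tele (Kg n) (Gd n 0 * Kg n 0) (Qg n) ?_ (fun m => rfl) n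
  rw [mul_assoc, mul_inv_cancel, mul_one]; rfl

theorem lift_fS_sRel : FreeGroup.lift (fS n) (sRel n) = 1 := by
  erw [sRel, map_mul, map_mul, map_list_prod, List.map_map]
  have hmap : ((List.finRange (n+1)).reverse.map
      ((FreeGroup.lift (fS n)) ∘ fun i =>
        ⁅FreeGroup.of (α := SGen n) (Sum.inr (i, true)),
          FreeGroup.of (α := SGen n) (Sum.inr (i, false))⁆)).prod
        = wP (Kg n) (n + 1) := by
    have : ((FreeGroup.lift (fS n)) ∘ fun i =>
        ⁅FreeGroup.of (α := SGen n) (Sum.inr (i, true)),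
          FreeGroup.of (α := SGen n) (Sum.inr (i, false))⁆)
        = fun i => ⁅al n i, be n i⁆ := by
      funext i
      simp only [Function.comp_apply, map_commutatorElement, FreeGroup.lift_apply_of]
      erw [FreeGroup.lift_apply_of, FreeGroup.lift_apply_of]
      show ⁅fS n (Sum.inr (i, true)), fS n (Sum.inr (i, false))⁆ = _
      simp [fS]
    rw [this, finRange_reverse_map_prod]
    rfl
  erw [hmap]
  have h0 : FreeGroup.lift (fS n) (FreeGroup.of ((Sum.inl 0) : SGen n)) = Gc n 0 := by
    erw [FreeGroup.lift_apply_of]; simp [fS]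
  have h1 : FreeGroup.lift (fS n) (FreeGroup.of ((Sum.inl 1) : SGen n)) = Qg n n := by
    erw [FreeGroup.lift_apply_of]; simp [fS]
  erw [h0, h1, mul_assoc, Qg_prod, Kg_zero, ← mul_assoc, grel_surface n 0]

/-- The homomorphism `S → Gₙ`. -/
def phiS : SGrp n →* GGrp n :=
  PresentedGroup.toGroup (f := fS n) (by
    rintro r hr
    rw [Set.mem_singleton_iff] at hr
    subst hr
    exact lift_fS_sRel n)

/-- The homomorphism `φ : S ∗ F → Gₙ`. -/
def phi : Monoid.Coprod (SGrp n) (FreeGroup (Fin n)) →* GGrp n :=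
  Monoid.Coprod.lift (phiS n) (FreeGroup.lift (Gt n))

/-! ### The map `ψ : Gₙ → S ∗ F` -/

/-- The coproduct `S ∗ F`. -/
abbrev XG := Monoid.Coprod (SGrp n) (FreeGroup (Fin n))

/-- `a'ᵢ` in `S ∗ F`. -/
def Ax (i : Fin (n + 1)) : XG n :=
  Monoid.Coprod.inl (PresentedGroup.of (rels := ({sRel n} : Set _)) (Sum.inr (i, true)))

/-- `b'ᵢ` in `S ∗ F`. -/
def Bx (i : Fin (n + 1)) : XG n :=
  Monoid.Coprod.inl (PresentedGroup.of (rels := ({sRel n} : Set _)) (Sum.inr (i, false)))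

/-- `⁅a'ᵢ, b'ᵢ⁆` in `S ∗ F`. -/
def Lx (i : ℕ) : XG n := if h : i < n + 1 then ⁅Ax n ⟨i, h⟩, Bx n ⟨i, h⟩⁆ else 1

/-- `tⱼ` in `S ∗ F`. -/
def Tx (j : ℕ) : XG n :=
  if h : j < n then Monoid.Coprod.inr (FreeGroup.of (⟨j, h⟩ : Fin n)) else 1

/-- `t₀ ⋯ t_{i-1}` in `S ∗ F`. -/
def Px : ℕ → XG n
  | 0 => 1
  | i + 1 => Px i * Tx n i

/-- `d₀ ⁅a'₁,b'₁⁆⁻¹ ⋯ ⁅a'ᵢ,b'ᵢ⁆⁻¹` in `S ∗ F`. -/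
def Qx : ℕ → XG n
  | 0 => (Monoid.Coprod.inl (Sc n))⁻¹ * (Lx n 0)⁻¹
  | i + 1 => Qx i * (Lx n (i + 1))⁻¹

/-- The image of `dᵢ` in `S ∗ F`. -/
def Dx (i : ℕ) : XG n :=
  if Even i then (Px n i)⁻¹ * Qx n i * Px n i else (Px n i)⁻¹ * (Qx n i)⁻¹ * Px n i

/-- The image of `cᵢ` in `S ∗ F`. -/
def Cx : ℕ → XG n
  | 0 => Monoid.Coprod.inl (Sc n)
  | i + 1 => (Tx n i)⁻¹ * Dx n i * Tx n i

/-- Images of the generators of `Gₙ` in `S ∗ F`. -/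
def fG : GGen n → XG n
  | Sum.inl (i, m) =>
      if m = 0 then
        (if Even (i : ℕ) then (Px n i)⁻¹ * Ax n i * Px n i
         else (Dx n i)⁻¹ * ((Px n i)⁻¹ * Bx n i * Px n i) * Dx n i)
      else if m = 1 then
        (if Even (i : ℕ) then (Px n i)⁻¹ * Bx n i * Px n i
         else (Dx n i)⁻¹ * ((Px n i)⁻¹ * Ax n i * Px n i) * Dx n i)
      else if m = 2 then Cx n i
      else Dx n i
  | Sum.inr j => Tx n j

theorem fG_a (i : Fin (n + 1)) : fG n (Sum.inl (i, 0)) =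
    (if Even (i : ℕ) then (Px n i)⁻¹ * Ax n i * Px n i
     else (Dx n i)⁻¹ * ((Px n i)⁻¹ * Bx n i * Px n i) * Dx n i) := rfl

theorem fG_b (i : Fin (n + 1)) : fG n (Sum.inl (i, 1)) =
    (if Even (i : ℕ) then (Px n i)⁻¹ * Bx n i * Px n i
     else (Dx n i)⁻¹ * ((Px n i)⁻¹ * Ax n i * Px n i) * Dx n i) := rfl

theorem fG_c (i : Fin (n + 1)) : fG n (Sum.inl (i, 2)) = Cx n i := rfl

theorem fG_d (i : Fin (n + 1)) : fG n (Sum.inl (i, 3)) = Dx n i := rfl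

theorem fG_t (j : Fin n) : fG n (Sum.inr j) = Tx n j := rfl

theorem surf_x (i : Fin (n + 1)) :
    Cx n i * Dx n i * ⁅fG n (Sum.inl (i, 0)), fG n (Sum.inl (i, 1))⁆ = 1 := by
  obtain ⟨k, hk⟩ := i
  rw [fG_a, fG_b]
  match k with
  | 0 =>
      have hv : ((⟨0, hk⟩ : Fin (n + 1)) : ℕ) = 0 := rfl
      rw [hv, if_pos Even.zero, if_pos Even.zero]
      have hL : Lx n 0 = ⁅Ax n ⟨0, hk⟩, Bx n ⟨0, hk⟩⁆ := dif_pos hk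
      show Cx n 0 * Dx n 0 * _ = 1
      rw [Cx, Dx, if_pos Even.zero]
      show Monoid.Coprod.inl (Sc n) * ((Px n 0)⁻¹ * ((Monoid.Coprod.inl (Sc n))⁻¹ * (Lx n 0)⁻¹) *
        Px n 0) * _ = 1
      rw [hL]
      show _ * _ * ⁅(Px n 0)⁻¹ * Ax n ⟨0, hk⟩ * Px n 0, (Px n 0)⁻¹ * Bx n ⟨0, hk⟩ * Px n 0⁆ = 1
      rw [comm_conj]
      have hP : Px n 0 = 1 := rfl
      rw [hP]
      group
  | j + 1 =>
      have hv : ((⟨j + 1, hk⟩ : Fin (n + 1)) : ℕ) = j + 1 := rfl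
      have hjn : j < n := by omega
      have hL : Lx n (j + 1) = ⁅Ax n ⟨j + 1, hk⟩, Bx n ⟨j + 1, hk⟩⁆ := dif_pos hk
      have hQ : Qx n (j + 1) = Qx n j * (Lx n (j + 1))⁻¹ := rfl
      have hPx : Px n (j + 1) = Px n j * Tx n j := rfl
      have hC : Cx n (j + 1) = (Tx n j)⁻¹ * Dx n j * Tx n j := rfl
      rw [hv]
      rcases Nat.even_or_odd j with hpar | hpar
      · -- j even, j+1 odd
        have hodd : ¬ Even (j + 1) := by simp [Nat.even_add_one, hpar]
        rw [if_neg hodd, if_neg hodd]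
        show Cx n (j+1) * Dx n (j+1) * _ = 1
        have hD1 : Dx n (j + 1) = (Px n (j+1))⁻¹ * (Qx n (j+1))⁻¹ * Px n (j+1) := by
          rw [Dx, if_neg hodd]
        have hDj : Dx n j = (Px n j)⁻¹ * Qx n j * Px n j := by rw [Dx, if_pos hpar]
        have hcomm : ⁅(Dx n (j+1))⁻¹ * ((Px n (j+1))⁻¹ * Bx n ⟨j+1, hk⟩ * Px n (j+1)) * Dx n (j+1),
            (Dx n (j+1))⁻¹ * ((Px n (j+1))⁻¹ * Ax n ⟨j+1, hk⟩ * Px n (j+1)) * Dx n (j+1)⁆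
            = (Dx n (j+1))⁻¹ * ((Px n (j+1))⁻¹ * ⁅Bx n ⟨j+1, hk⟩, Ax n ⟨j+1, hk⟩⁆ * Px n (j+1)) *
              Dx n (j+1) := by
          simp only [commutatorElement_def]
          group
        rw [hcomm, ← commutatorElement_inv, ← hL, hC, hD1, hQ, hPx, hDj]
        group
      · -- j odd, j+1 even
        have heven : Even (j + 1) := Odd.add_one hpar
        have hoddj : ¬ Even j := Nat.not_even_iff_odd.mpr hpar
        rw [if_pos heven, if_pos heven]
        show Cx n (j+1) * Dx n (j+1) * _ = 1
        have hD1 : Dx n (j + 1) = (Px n (j+1))⁻¹ * Qx n (j+1) * Px n (j+1) := by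
          rw [Dx, if_pos heven]
        have hDj : Dx n j = (Px n j)⁻¹ * (Qx n j)⁻¹ * Px n j := by rw [Dx, if_neg hoddj]
        rw [comm_conj, ← hL, hC, hD1, hQ, hPx, hDj]
        group

theorem lift_fG_rels : ∀ r ∈ GRels n, FreeGroup.lift (fG n) r = 1 := by
  rintro r (⟨i, rfl⟩ | ⟨j, rfl⟩)
  · erw [map_mul, map_mul, map_commutatorElement, FreeGroup.lift_apply_of, FreeGroup.lift_apply_of,
      FreeGroup.lift_apply_of, FreeGroup.lift_apply_of, fG_c, fG_d]
    exact surf_x n i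
  · erw [map_mul, map_mul, map_mul, map_inv, map_inv]
    erw [FreeGroup.lift_apply_of, FreeGroup.lift_apply_of, FreeGroup.lift_apply_of]
    erw [fG_t, fG_c, fG_d]
    have hcs : ((j.castSucc : Fin (n + 1)) : ℕ) = (j : ℕ) := rfl
    have hsc : ((j.succ : Fin (n + 1)) : ℕ) = (j : ℕ) + 1 := rfl
    rw [hcs, hsc]
    have hC : Cx n ((j : ℕ) + 1) = (Tx n j)⁻¹ * Dx n j * Tx n j := rfl
    rw [hC]
    group

/-- The homomorphism `ψ : Gₙ → S ∗ F`. -/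
def psi : GGrp n →* XG n :=
  PresentedGroup.toGroup (f := fG n) (lift_fG_rels n)

/-! ### Computation lemmas for `φ` -/

theorem phiS_of (x : SGen n) : phiS n (PresentedGroup.of x) = fS n x :=
  PresentedGroup.toGroup.of _

theorem phi_inl (s : SGrp n) : phi n (Monoid.Coprod.inl s) = phiS n s :=
  Monoid.Coprod.lift_apply_inl _ _ _

theorem phi_inr (s : FreeGroup (Fin n)) : phi n (Monoid.Coprod.inr s) = FreeGroup.lift (Gt n) s :=
  Monoid.Coprod.lift_apply_inr _ _ _

theorem phi_Ax (i : Fin (n + 1)) : phi n (Ax n i) = al n i := by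
  erw [Ax, phi_inl, phiS_of]; simp [fS]

theorem phi_Bx (i : Fin (n + 1)) : phi n (Bx n i) = be n i := by
  erw [Bx, phi_inl, phiS_of]; simp [fS]

theorem phi_Tx (k : ℕ) : phi n (Tx n k) = Tg n k := by
  rw [Tx, Tg]
  split
  · rw [phi_inr, FreeGroup.lift_apply_of]
  · exact map_one _

theorem phi_Px : ∀ k, phi n (Px n k) = Pg n k
  | 0 => map_one _
  | k + 1 => by rw [Px, Pg, map_mul, phi_Px k, phi_Tx]

theorem phi_Lx (k : ℕ) : phi n (Lx n k) = Kg n k := by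
  rw [Lx, Kg]
  split
  · rw [map_commutatorElement, phi_Ax, phi_Bx]
  · exact map_one _

theorem phi_Qx : ∀ k, phi n (Qx n k) = Qg n k
  | 0 => by
      rw [Qx, Qg, map_mul, map_inv, map_inv, phi_Lx]
      have h : phi n (Monoid.Coprod.inl (Sc n)) = Gc n 0 := by
        erw [phi_inl, Sc, phiS_of]; simp [fS]
      rw [h, Kg_zero]
      have h2 : Gc n 0 * Gd n 0 = ⁅Ga n 0, Gb n 0⁆⁻¹ :=
        mul_eq_one_iff_eq_inv.mp (grel_surface n 0)
      rw [← h2]; group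
  | k + 1 => by rw [Qx, Qg, map_mul, map_inv, phi_Qx k, phi_Lx]

theorem phi_Dx (k : ℕ) (h : k < n + 1) : phi n (Dx n k) = Gd n ⟨k, h⟩ := by
  rw [Dx]
  rcases Nat.even_or_odd k with hpar | hpar
  · rw [if_pos hpar, map_mul, map_mul, map_inv, phi_Px, phi_Qx, Qg_eq n k h, if_pos hpar]
    group
  · rw [if_neg (Nat.not_even_iff_odd.mpr hpar), map_mul, map_mul, map_inv, map_inv, phi_Px,
      phi_Qx, Qg_eq n k h, if_neg (Nat.not_even_iff_odd.mpr hpar)]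
    group

theorem phi_Cx : ∀ (k : ℕ) (h : k < n + 1), phi n (Cx n k) = Gc n ⟨k, h⟩
  | 0, h => by
      erw [Cx, phi_inl, Sc, phiS_of]
      simp [fS]
  | k + 1, h => by
      have hk : k < n := by omega
      have hk1 : k < n + 1 := by omega
      rw [Cx, map_mul, map_mul, map_inv, phi_Tx, phi_Dx n k hk1, Tg, dif_pos hk]
      have hrel := grel_conj n ⟨k, hk⟩
      have hcs : ((⟨k, hk⟩ : Fin n).castSucc : Fin (n + 1)) = ⟨k, hk1⟩ := rfl
      have hsc : ((⟨k, hk⟩ : Fin n).succ : Fin (n + 1)) = ⟨k + 1, h⟩ := rfl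
      rw [hcs, hsc] at hrel
      exact hrel

theorem phi_fG_a (i : Fin (n + 1)) : phi n (fG n (Sum.inl (i, 0))) = Ga n i := by
  rw [fG_a]
  rcases Nat.even_or_odd (i : ℕ) with hpar | hpar
  · rw [if_pos hpar, map_mul, map_mul, map_inv, phi_Px, phi_Ax, al, if_pos hpar]
    group
  · have hne := Nat.not_even_iff_odd.mpr hpar
    rw [if_neg hne, map_mul, map_mul, map_mul, map_mul, map_inv, map_inv, phi_Px,
      phi_Dx n (i : ℕ) i.isLt, phi_Bx, be, if_neg hne]
    show (Gd n i)⁻¹ * ((Pg n (i:ℕ))⁻¹ * (Pg n (i:ℕ) * (Gd n i * Ga n i * (Gd n i)⁻¹) *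
      (Pg n (i:ℕ))⁻¹) * Pg n (i:ℕ)) * Gd n i = Ga n i
    group

theorem phi_fG_b (i : Fin (n + 1)) : phi n (fG n (Sum.inl (i, 1))) = Gb n i := by
  rw [fG_b]
  rcases Nat.even_or_odd (i : ℕ) with hpar | hpar
  · rw [if_pos hpar, map_mul, map_mul, map_inv, phi_Px, phi_Bx, be, if_pos hpar]
    group
  · have hne := Nat.not_even_iff_odd.mpr hpar
    rw [if_neg hne, map_mul, map_mul, map_mul, map_mul, map_inv, map_inv, phi_Px,
      phi_Dx n (i : ℕ) i.isLt, phi_Ax, al, if_neg hne]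
    show (Gd n i)⁻¹ * ((Pg n (i:ℕ))⁻¹ * (Pg n (i:ℕ) * (Gd n i * Gb n i * (Gd n i)⁻¹) *
      (Pg n (i:ℕ))⁻¹) * Pg n (i:ℕ)) * Gd n i = Gb n i
    group

theorem phi_fG_c (i : Fin (n + 1)) : phi n (fG n (Sum.inl (i, 2))) = Gc n i := by
  rw [fG_c, phi_Cx n (i : ℕ) i.isLt]

theorem phi_fG_d (i : Fin (n + 1)) : phi n (fG n (Sum.inl (i, 3))) = Gd n i := by
  rw [fG_d, phi_Dx n (i : ℕ) i.isLt]

theorem phi_fG_t (j : Fin n) : phi n (fG n (Sum.inr j)) = Gt n j := by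
  rw [fG_t, phi_Tx, Tg, dif_pos j.isLt]

/-! ### Computation lemmas for `ψ` -/

theorem psi_of (x : GGen n) : psi n (PresentedGroup.of x) = fG n x :=
  PresentedGroup.toGroup.of _

theorem psi_Ga (i : Fin (n + 1)) : psi n (Ga n i) = fG n (Sum.inl (i, 0)) := psi_of n _
theorem psi_Gb (i : Fin (n + 1)) : psi n (Gb n i) = fG n (Sum.inl (i, 1)) := psi_of n _
theorem psi_Gc (i : Fin (n + 1)) : psi n (Gc n i) = Cx n i := psi_of n _
theorem psi_Gd (i : Fin (n + 1)) : psi n (Gd n i) = Dx n i := psi_of n _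
theorem psi_Gt (j : Fin n) : psi n (Gt n j) = Tx n j := psi_of n _

theorem psi_Tg (k : ℕ) : psi n (Tg n k) = Tx n k := by
  rw [Tg]
  split
  · next h => rw [psi_Gt n ⟨k, h⟩]
  · next h => rw [map_one, Tx, dif_neg h]

theorem psi_Pg : ∀ k, psi n (Pg n k) = Px n k
  | 0 => map_one _
  | k + 1 => by rw [Pg, Px, map_mul, psi_Pg k, psi_Tg]

theorem psi_al (i : Fin (n + 1)) : psi n (al n i) = Ax n i := by
  rw [al]
  rcases Nat.even_or_odd (i : ℕ) with hpar | hpar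
  · rw [if_pos hpar, map_mul, map_mul, map_inv, psi_Pg, psi_Ga, fG_a, if_pos hpar]
    group
  · have hne := Nat.not_even_iff_odd.mpr hpar
    rw [if_neg hne, map_mul, map_mul, map_mul, map_mul, map_inv, map_inv, psi_Pg, psi_Gd,
      psi_Gb, fG_b, if_neg hne]
    group

theorem psi_be (i : Fin (n + 1)) : psi n (be n i) = Bx n i := by
  rw [be]
  rcases Nat.even_or_odd (i : ℕ) with hpar | hpar
  · rw [if_pos hpar, map_mul, map_mul, map_inv, psi_Pg, psi_Gb, fG_b, if_pos hpar]
    group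
  · have hne := Nat.not_even_iff_odd.mpr hpar
    rw [if_neg hne, map_mul, map_mul, map_mul, map_mul, map_inv, map_inv, psi_Pg, psi_Gd,
      psi_Ga, fG_a, if_neg hne]
    group

theorem psi_Kg (k : ℕ) : psi n (Kg n k) = Lx n k := by
  rw [Kg, Lx]
  split
  · rw [map_commutatorElement, psi_al, psi_be]
  · exact map_one _

theorem psi_Qg : ∀ k, psi n (Qg n k) = Qx n k
  | 0 => by
      rw [Qg]
      have h := psi_Gd n 0
      have h0 : Dx n ((0 : Fin (n + 1)) : ℕ) = Dx n 0 := rfl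
      rw [h0] at h
      rw [h, Dx, if_pos Even.zero]
      have hP : Px n 0 = 1 := rfl
      rw [hP, Qx]
      group
  | k + 1 => by rw [Qg, Qx, map_mul, map_inv, psi_Qg k, psi_Kg]

/-! ### `Qx n n` is the boundary generator `d'ₙ` -/

theorem Qx_eq_Sd : Qx n n = Monoid.Coprod.inl (Sd n) := by
  have hs0 : PresentedGroup.mk ({sRel n} : Set _)
      (FreeGroup.of (α := SGen n) (Sum.inl 0) * FreeGroup.of (α := SGen n) (Sum.inl 1) *
        (((List.finRange (n + 1)).reverse.map fun i =>
          ⁅FreeGroup.of (α := SGen n) (Sum.inr (i, true)),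
            FreeGroup.of (α := SGen n) (Sum.inr (i, false))⁆).prod)) = 1 :=
    (QuotientGroup.eq_one_iff _).mpr (Subgroup.subset_normalClosure rfl)
  have hs2 := congrArg (Monoid.Coprod.inl :
    SGrp n →* Monoid.Coprod (SGrp n) (FreeGroup (Fin n))) hs0
  rw [map_mul, map_mul, map_one, map_mul, map_list_prod, List.map_map] at hs2
  rw [map_mul, map_list_prod, List.map_map] at hs2
  have hfun : ((Monoid.Coprod.inl : SGrp n →* Monoid.Coprod (SGrp n) (FreeGroup (Fin n))) ∘
      ((PresentedGroup.mk ({sRel n} : Set _)) ∘ fun i =>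
        ⁅FreeGroup.of (α := SGen n) (Sum.inr (i, true)),
          FreeGroup.of (α := SGen n) (Sum.inr (i, false))⁆))
      = fun i => ⁅Ax n i, Bx n i⁆ := by
    funext i
    show (Monoid.Coprod.inl : SGrp n →* _) ((PresentedGroup.mk ({sRel n} : Set _))
      ⁅FreeGroup.of (α := SGen n) (Sum.inr (i, true)),
        FreeGroup.of (α := SGen n) (Sum.inr (i, false))⁆) = _
    rw [map_commutatorElement, map_commutatorElement]
    rfl
  rw [hfun] at hs2
  have hs3 : (Monoid.Coprod.inl (Sc n) : Monoid.Coprod (SGrp n) (FreeGroup (Fin n))) *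
      Monoid.Coprod.inl (Sd n) * wP (Lx n) (n + 1) = 1 := by
    rw [finRange_reverse_map_prod] at hs2
    exact hs2
  have htel : Qx n n * wP (Lx n) (n + 1) = (Monoid.Coprod.inl (Sc n))⁻¹ :=
    tele (Lx n) ((Monoid.Coprod.inl (Sc n))⁻¹) (Qx n) (by rw [Qx]) (fun m => rfl) n
  have hsd : (Monoid.Coprod.inl (Sd n) : Monoid.Coprod (SGrp n) (FreeGroup (Fin n)))
      = (Monoid.Coprod.inl (Sc n))⁻¹ * (wP (Lx n) (n + 1))⁻¹ := by
    calc (Monoid.Coprod.inl (Sd n) : Monoid.Coprod (SGrp n) (FreeGroup (Fin n)))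
        = (Monoid.Coprod.inl (Sc n))⁻¹ * (Monoid.Coprod.inl (Sc n) * Monoid.Coprod.inl (Sd n) *
            wP (Lx n) (n + 1)) * (wP (Lx n) (n + 1))⁻¹ := by group
    _ = (Monoid.Coprod.inl (Sc n))⁻¹ * 1 * (wP (Lx n) (n + 1))⁻¹ := by rw [hs3]
    _ = (Monoid.Coprod.inl (Sc n))⁻¹ * (wP (Lx n) (n + 1))⁻¹ := by group
  calc Qx n n = Qx n n * wP (Lx n) (n + 1) * (wP (Lx n) (n + 1))⁻¹ := by group
  _ = (Monoid.Coprod.inl (Sc n))⁻¹ * (wP (Lx n) (n + 1))⁻¹ := by rw [htel]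
  _ = Monoid.Coprod.inl (Sd n) := hsd.symm

/-! ### The compositions -/

theorem psi_comp_phi : (psi n).comp (phi n) = MonoidHom.id _ := by
  refine Monoid.Coprod.hom_ext (PresentedGroup.ext fun x => ?_)
    (FreeGroup.ext_hom _ _ fun j => ?_)
  · simp only [MonoidHom.comp_apply]
    rw [phi_inl, phiS_of]
    show psi n (fS n x) = Monoid.Coprod.inl (PresentedGroup.of x)
    rcases x with j | ⟨i, b⟩
    · rcases j with ⟨jv, hj⟩
      obtain rfl | rfl : jv = 0 ∨ jv = 1 := by omega
      · have h0 : fS n (Sum.inl ⟨0, hj⟩) = Gc n 0 := by simp [fS]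
        rw [h0, psi_Gc]
        rfl
      · have h1 : fS n (Sum.inl ⟨1, hj⟩) = Qg n n := by simp [fS]
        rw [h1, psi_Qg, Qx_eq_Sd]
        rfl
    · cases b
      · have h1 : fS n (Sum.inr (i, false)) = be n i := by simp [fS]
        rw [h1, psi_be]
        rfl
      · have h1 : fS n (Sum.inr (i, true)) = al n i := by simp [fS]
        rw [h1, psi_al]
        rfl
  · simp only [MonoidHom.comp_apply]
    rw [phi_inr, FreeGroup.lift_apply_of, psi_Gt, Tx, dif_pos j.isLt]
    rfl

theorem phi_comp_psi : (phi n).comp (psi n) = MonoidHom.id _ := by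
  refine PresentedGroup.ext fun x => ?_
  simp only [MonoidHom.comp_apply, MonoidHom.id_apply]
  rw [psi_of]
  rcases x with ⟨i, m⟩ | j
  · fin_cases m
    · exact phi_fG_a n i
    · exact phi_fG_b n i
    · exact phi_fG_c n i
    · exact phi_fG_d n i
  · exact phi_fG_t n j

end SurfaceDecomp


/-- For even `n ≥ 2`, `Gₙ` decomposes as the free product `S * ⟨t₀⟩ * ⋯ * ⟨t_{n-1}⟩`
where `S` is the above surface group, the boundary generator `c₀` of `S` maps to `c₀`
and the boundary generator `d'ₙ` maps to a conjugate of `dₙ`. -/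
theorem GGrp_surface_decomposition (n : ℕ) (hn : 2 ≤ n) (he : Even n) :
    ∃ ψ : Monoid.Coprod (SGrp n) (FreeGroup (Fin n)) ≃* GGrp n,
      ψ (Monoid.Coprod.inl (Sc n)) = Gc n 0 ∧
      IsConj (Gd n (Fin.last n)) (ψ (Monoid.Coprod.inl (Sd n))) ∧
      ∀ j : Fin n, ψ (Monoid.Coprod.inr (FreeGroup.of j)) = Gt n j := by
  refine ⟨MonoidHom.toMulEquiv (SurfaceDecomp.phi n) (SurfaceDecomp.psi n)
    (SurfaceDecomp.psi_comp_phi n) (SurfaceDecomp.phi_comp_psi n), ?_, ?_, ?_⟩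
  · show SurfaceDecomp.phi n (Monoid.Coprod.inl (Sc n)) = Gc n 0
    erw [SurfaceDecomp.phi_inl, Sc, SurfaceDecomp.phiS_of]
    simp [SurfaceDecomp.fS]
  · show IsConj (Gd n (Fin.last n)) (SurfaceDecomp.phi n (Monoid.Coprod.inl (Sd n)))
    erw [SurfaceDecomp.phi_inl, Sd, SurfaceDecomp.phiS_of]
    have h1 : SurfaceDecomp.fS n (Sum.inl 1) = SurfaceDecomp.Qg n n := by
      simp [SurfaceDecomp.fS]
    rw [h1, SurfaceDecomp.Qg_eq n n (by omega), if_pos he]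
    have hlast : (⟨n, by omega⟩ : Fin (n + 1)) = Fin.last n := rfl
    rw [hlast, isConj_iff]
    exact ⟨SurfaceDecomp.Pg n n, rfl⟩
  · intro j
    show SurfaceDecomp.phi n (Monoid.Coprod.inr (FreeGroup.of j)) = Gt n j
    rw [SurfaceDecomp.phi_inr, FreeGroup.lift_apply_of]
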